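/- Let c be a forget node of the nice tree decomposition T with child b and B(c) = B(b) \ {v}, v ∈ B(b), and let f ∈ P(Q). Suppose there are a positive integer M such that M·f(K) is an integer for every K ∈ ℛ(c), and binary vectors I_1,…,I_M ∈ {0,1}^(ℛ(b)), each satisfying the constraints relevant to T(b), with f|_b = (1/M) Σ_i I_i. Then there exist binary vectors J_1,…,J_M ∈ {0,1}^(ℛ(c)), each satisfying the constraints relevant to T(c), such that f|_c = (1/M) Σ_i J_i. -/

import Mathlib

/-! Common definitions: CSP instances, configurations, nice tree decompositions,
and the polytopes from Kolman–Koutecký. -/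

/-- A constraint with scope `scope`; its satisfaction depends only on the
coordinates in the scope (it is a relation on the domains of the scope). -/
structure CSPConstraint (n : ℕ) where
  scope : Finset (Fin n)
  sat : (Fin n → ℝ) → Prop
  sat_congr : ∀ z z' : Fin n → ℝ, (∀ v ∈ scope, z v = z' v) → sat z → sat z'

/-- A CSP instance: finite real domains, hard constraints and soft constraints. -/
structure CSPInstance (n : ℕ) where
  dom : Fin n → Finset ℝ
  hard : List (CSPConstraint n)
  soft : List (CSPConstraint n)

variable {n : ℕ}

/-- The list of all constraints (hard and soft). -/
def consList (Q : CSPInstance n) : List (CSPConstraint n) := Q.hard ++ Q.soft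

/-- A feasible assignment: values in the domains, satisfying all hard constraints. -/
def Feasible (Q : CSPInstance n) (z : Fin n → ℝ) : Prop :=
  (∀ v, z v ∈ Q.dom v) ∧ ∀ C ∈ Q.hard, C.sat z

-- Configurations of a set `W` of variables: partial assignments (with `none`
-- playing the role of the symbol `λ`) defined exactly on `W`.
open Classical in
noncomputable def configs (Q : CSPInstance n) (W : Finset (Fin n)) :
    Finset (Fin n → Option ℝ) :=
  (Fintype.piFinset fun v =>
      if v ∈ W then (Q.dom v).image some else ({none} : Finset (Option ℝ))).filter
    (fun K => ∀ C ∈ Q.hard, C.scope ⊆ W → C.sat (fun v => (K v).getD 0))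

/-- Restriction `K↾_W` of a configuration: coordinates outside `W` are set to `λ`. -/
def restrictCfg (K : Fin n → Option ℝ) (W : Finset (Fin n)) : Fin n → Option ℝ :=
  fun v => if v ∈ W then K v else none

/-- A (rooted) nice tree: leaves, introduce nodes, forget nodes and join nodes. -/
inductive NiceTree (n : ℕ) : Type
  | leaf (v : Fin n) : NiceTree n
  | introduce (v : Fin n) (t : NiceTree n) : NiceTree n
  | forget (v : Fin n) (t : NiceTree n) : NiceTree n
  | join (t₁ t₂ : NiceTree n) : NiceTree n

namespace NiceTree

/-- The bag of the root node of a nice tree. -/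
def bag : NiceTree n → Finset (Fin n)
  | leaf v => {v}
  | introduce v t => insert v (bag t)
  | forget v t => (bag t).erase v
  | join t₁ _ => bag t₁

/-- All vertices appearing in bags of the tree. -/
def verts : NiceTree n → Finset (Fin n)
  | leaf v => {v}
  | introduce v t => insert v (verts t)
  | forget _ t => verts t
  | join t₁ t₂ => verts t₁ ∪ verts t₂

/-- Number of nodes of the tree. -/
def size : NiceTree n → ℕ
  | leaf _ => 1
  | introduce _ t => size t + 1
  | forget _ t => size t + 1
  | join t₁ t₂ => size t₁ + size t₂ + 1

/-- Structural validity of a nice tree (in particular, the connectivity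
condition of tree decompositions: an introduced vertex does not occur below,
and vertices shared by the two subtrees of a join lie in its bag). -/
def valid : NiceTree n → Prop
  | leaf _ => True
  | introduce v t => v ∉ verts t ∧ valid t
  | forget v t => v ∈ bag t ∧ valid t
  | join t₁ t₂ => bag t₁ = bag t₂ ∧ verts t₁ ∩ verts t₂ ⊆ bag t₁ ∧ valid t₁ ∧ valid t₂

/-- `isSubtree s t`: `s` is a node (subtree) of `t`. -/
def isSubtree (s : NiceTree n) : NiceTree n → Prop
  | leaf v => s = leaf v
  | introduce v t => s = introduce v t ∨ isSubtree s t
  | forget v t => s = forget v t ∨ isSubtree s t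
  | join t₁ t₂ => s = join t₁ t₂ ∨ isSubtree s t₁ ∨ isSubtree s t₂

-- The configurations relevant to the subtree: `ℛ(a) = ⋃_{b ∈ T(a)} 𝒦(B(b))`.
open Classical in
noncomputable def relConfigs (Q : CSPInstance n) : NiceTree n → Finset (Fin n → Option ℝ)
  | leaf v => configs Q {v}
  | introduce v t => configs Q (insert v (bag t)) ∪ relConfigs Q t
  | forget v t => configs Q ((bag t).erase v) ∪ relConfigs Q t
  | join t₁ t₂ => relConfigs Q t₁ ∪ relConfigs Q t₂

end NiceTree

/-- A valid nice tree decomposition for the CSP instance `Q`: every variable is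
in some bag and every constraint scope is contained in some bag. -/
def IsNiceTreeDecompCSP (Q : CSPInstance n) (T : NiceTree n) : Prop :=
  T.valid ∧ (∀ v : Fin n, v ∈ T.verts) ∧
    ∀ C ∈ consList Q, ∃ s : NiceTree n, s.isSubtree T ∧ C.scope ⊆ s.bag

/-- A valid nice tree decomposition of a graph `G`: every vertex is in some bag
and both endpoints of every edge lie in a common bag. -/
def IsNiceTreeDecompGraph (G : SimpleGraph (Fin n)) (T : NiceTree n) : Prop :=
  T.valid ∧ (∀ v : Fin n, v ∈ T.verts) ∧
    ∀ u v : Fin n, G.Adj u v → ∃ s : NiceTree n, s.isSubtree T ∧ u ∈ s.bag ∧ v ∈ s.bag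

/-- The constraint graph of a CSP instance. -/
def constraintGraph (Q : CSPInstance n) : SimpleGraph (Fin n) where
  Adj u v := u ≠ v ∧ ∃ C ∈ consList Q, u ∈ C.scope ∧ v ∈ C.scope
  symm := by
    constructor
    rintro u v ⟨hne, C, hC, hu, hv⟩
    exact ⟨hne.symm, C, hC, hv, hu⟩
  loopless := by
    constructor
    rintro v ⟨hne, -⟩
    exact hne rfl

-- The LP constraints of `P(Q)` relevant to the subtree `t`: bag equations and
-- consistency equations at introduce and forget nodes of `t`.
def RelCons (Q : CSPInstance n) (f : (Fin n → Option ℝ) → ℝ) : NiceTree n → Prop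
  | .leaf v => ∑ K ∈ configs Q {v}, f K = 1
  | .introduce v t =>
      RelCons Q f t ∧ (∑ K ∈ configs Q (insert v t.bag), f K = 1) ∧
      ∀ K ∈ configs Q t.bag,
        ∑ K' ∈ (configs Q (insert v t.bag)).filter
            (fun K' => restrictCfg K' t.bag = K), f K' = f K
  | .forget v t =>
      RelCons Q f t ∧ (∑ K ∈ configs Q (t.bag.erase v), f K = 1) ∧
      ∀ K ∈ configs Q (t.bag.erase v),
        ∑ K' ∈ (configs Q t.bag).filter
            (fun K' => restrictCfg K' (t.bag.erase v) = K), f K' = f K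
  | .join t₁ t₂ => RelCons Q f t₁ ∧ RelCons Q f t₂

/-- All the constraints of `P(Q)` relevant to the subtree `t`, including the
bounds `0 ≤ f(K) ≤ 1` for relevant configurations. -/
def RelevantLP (Q : CSPInstance n) (t : NiceTree n) (f : (Fin n → Option ℝ) → ℝ) : Prop :=
  RelCons Q f t ∧ ∀ K ∈ t.relConfigs Q, 0 ≤ f K ∧ f K ≤ 1

/-- The polytope `P(Q) ⊆ ℝ^{𝒦_ℬ}` (coordinates outside `𝒦_ℬ` are zero). -/
def Ppoly (Q : CSPInstance n) (T : NiceTree n) : Set ((Fin n → Option ℝ) → ℝ) :=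
  {f | RelevantLP Q T f ∧ ∀ K, K ∉ T.relConfigs Q → f K = 0}

/-- Extended feasible assignments `(z, h)`. -/
def ExtAssignments (Q : CSPInstance n) :
    Set ((Fin n → ℝ) × (Fin Q.soft.length → ℝ)) :=
  {p | Feasible Q p.1 ∧ ∀ i : Fin Q.soft.length,
      ((Q.soft.get i).sat p.1 ∧ p.2 i = 1) ∨ (¬ (Q.soft.get i).sat p.1 ∧ p.2 i = 0)}

/-- `CSP(Q)`: the convex hull of all extended feasible assignments. -/
def CSPpolytope (Q : CSPInstance n) : Set ((Fin n → ℝ) × (Fin Q.soft.length → ℝ)) :=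
  convexHull ℝ (ExtAssignments Q)

/-- `CSP'(Q)`: the convex hull of all feasible assignments. -/
def CSPpolytope' (Q : CSPInstance n) : Set (Fin n → ℝ) :=
  convexHull ℝ {z | Feasible Q z}

/-- The `y`-variables of the basic LP: one for each `v ∈ V` and `i ∈ D_v`. -/
abbrev YType (Q : CSPInstance n) := (v : Fin n) → {i : ℝ // i ∈ Q.dom v} → ℝ

/-- The `g`-variables of the basic LP: one for each constraint `C_U ∈ 𝒞 ∪ ℋ`
and each configuration `K ∈ 𝒦(U)`. -/
abbrev GType (Q : CSPInstance n) :=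
  (c : Fin (consList Q).length) →
    {K : Fin n → Option ℝ // K ∈ configs Q ((consList Q).get c).scope} → ℝ

/-- The basic LP (1)–(3). -/
def BasicLP (Q : CSPInstance n) (p : YType Q × GType Q) : Prop :=
  (∀ v : Fin n, ∑ i ∈ (Q.dom v).attach, p.1 v i = 1) ∧
  (∀ c : Fin (consList Q).length, ∀ v ∈ ((consList Q).get c).scope,
    ∀ (i : ℝ) (hi : i ∈ Q.dom v),
      ∑ K ∈ (configs Q ((consList Q).get c).scope).attach.filter
          (fun K => K.1 v = some i), p.2 c K = p.1 v ⟨i, hi⟩) ∧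
  (∀ v i, 0 ≤ p.1 v i ∧ p.1 v i ≤ 1) ∧ (∀ c K, 0 ≤ p.2 c K ∧ p.2 c K ≤ 1)

/-- Integrality (all coordinates in `{0,1}`) of a `(y, g)` vector. -/
def IntegralYG (Q : CSPInstance n) (p : YType Q × GType Q) : Prop :=
  (∀ v i, p.1 v i = 0 ∨ p.1 v i = 1) ∧ ∀ c K, p.2 c K = 0 ∨ p.2 c K = 1

-- The map sending a (feasible) assignment `z` to the `(y, g)` vector of the basic LP.
open Classical in
noncomputable def exMap (Q : CSPInstance n) (z : Fin n → ℝ) : YType Q × GType Q :=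
  (fun v i => if z v = i.1 then 1 else 0,
   fun c K => if ∀ u ∈ ((consList Q).get c).scope, K.1 u = some (z u) then 1 else 0)

/-! ### Auxiliary lemmas for `forget_step` -/

section ForgetAux

open Finset

lemma cfg_none {Q : CSPInstance n} {W : Finset (Fin n)} {K : Fin n → Option ℝ}
    (hK : K ∈ configs Q W) {u : Fin n} (hu : u ∉ W) : K u = none := by
  classical
  simp only [configs, Finset.mem_filter, Fintype.mem_piFinset] at hK
  have h := hK.1 u
  rw [if_neg hu] at h
  simpa using h

lemma cfg_ne_none {Q : CSPInstance n} {W : Finset (Fin n)} {K : Fin n → Option ℝ}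
    (hK : K ∈ configs Q W) {u : Fin n} (hu : u ∈ W) : K u ≠ none := by
  classical
  simp only [configs, Finset.mem_filter, Fintype.mem_piFinset] at hK
  have h := hK.1 u
  rw [if_pos hu] at h
  rcases Finset.mem_image.mp h with ⟨r, _, hr⟩
  rw [← hr]; simp

lemma configs_eq_of_mem {Q : CSPInstance n} {W W' : Finset (Fin n)} {K : Fin n → Option ℝ}
    (h : K ∈ configs Q W) (h' : K ∈ configs Q W') : W = W' := by
  ext u
  constructor
  · intro hu; by_contra hu'; exact cfg_ne_none h hu (cfg_none h' hu')
  · intro hu; by_contra hu'; exact cfg_ne_none h' hu (cfg_none h hu')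

lemma restrict_mem_configs {Q : CSPInstance n} {W W' : Finset (Fin n)}
    (hWW : W ⊆ W') {K : Fin n → Option ℝ} (hK : K ∈ configs Q W') :
    restrictCfg K W ∈ configs Q W := by
  classical
  simp only [configs, Finset.mem_filter, Fintype.mem_piFinset] at hK ⊢
  constructor
  · intro u
    by_cases hu : u ∈ W
    · rw [if_pos hu]
      have h := hK.1 u
      rw [if_pos (hWW hu)] at h
      simpa [restrictCfg, hu] using h
    · rw [if_neg hu]
      simp [restrictCfg, hu]
  · intro C hC hCW
    refine C.sat_congr _ _ ?_ (hK.2 C hC (hCW.trans hWW))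
    intro u hu
    have huW : u ∈ W := hCW hu
    simp [restrictCfg, huW]

namespace NiceTree

lemma isSubtree_refl : ∀ t : NiceTree n, t.isSubtree t
  | leaf _ => rfl
  | introduce _ _ => Or.inl rfl
  | forget _ _ => Or.inl rfl
  | join _ _ => Or.inl rfl

lemma bag_subset_verts : ∀ t : NiceTree n, t.bag ⊆ t.verts
  | leaf v => subset_rfl
  | introduce v t => Finset.insert_subset_insert v (bag_subset_verts t)
  | forget v t => (Finset.erase_subset v t.bag).trans (bag_subset_verts t)
  | join t₁ t₂ => (bag_subset_verts t₁).trans Finset.subset_union_left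

lemma verts_subset_of_subtree : ∀ (t s : NiceTree n), s.isSubtree t → s.verts ⊆ t.verts
  | leaf v, s, hs => by rw [show s = leaf v from hs]
  | introduce v t, s, hs => by
      rcases hs with rfl | hs
      · exact subset_rfl
      · exact (verts_subset_of_subtree t s hs).trans (Finset.subset_insert v t.verts)
  | forget v t, s, hs => by
      rcases hs with rfl | hs
      · exact subset_rfl
      · exact verts_subset_of_subtree t s hs
  | join t₁ t₂, s, hs => by
      rcases hs with rfl | hs | hs
      · exact subset_rfl
      · exact (verts_subset_of_subtree t₁ s hs).trans Finset.subset_union_left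
      · exact (verts_subset_of_subtree t₂ s hs).trans Finset.subset_union_right

lemma valid_of_subtree : ∀ (t s : NiceTree n), s.isSubtree t → t.valid → s.valid
  | leaf v, s, hs, h => by rw [show s = leaf v from hs]; exact h
  | introduce v t, s, hs, h => by
      rcases hs with rfl | hs
      · exact h
      · exact valid_of_subtree t s hs h.2
  | forget v t, s, hs, h => by
      rcases hs with rfl | hs
      · exact h
      · exact valid_of_subtree t s hs h.2
  | join t₁ t₂, s, hs, h => by
      rcases hs with rfl | hs | hs
      · exact h
      · exact valid_of_subtree t₁ s hs h.2.2.1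
      · exact valid_of_subtree t₂ s hs h.2.2.2

lemma relConfigs_subset_of_subtree (Q : CSPInstance n) :
    ∀ (t s : NiceTree n), s.isSubtree t → s.relConfigs Q ⊆ t.relConfigs Q
  | leaf v, s, hs => by rw [show s = leaf v from hs]
  | introduce v t, s, hs => by
      rcases hs with rfl | hs
      · exact subset_rfl
      · exact (relConfigs_subset_of_subtree Q t s hs).trans
          (by simp only [relConfigs]; exact Finset.subset_union_right)
  | forget v t, s, hs => by
      rcases hs with rfl | hs
      · exact subset_rfl
      · exact (relConfigs_subset_of_subtree Q t s hs).trans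
          (by simp only [relConfigs]; exact Finset.subset_union_right)
  | join t₁ t₂, s, hs => by
      rcases hs with rfl | hs | hs
      · exact subset_rfl
      · exact (relConfigs_subset_of_subtree Q t₁ s hs).trans
          (by simp only [relConfigs]; exact Finset.subset_union_left)
      · exact (relConfigs_subset_of_subtree Q t₂ s hs).trans
          (by simp only [relConfigs]; exact Finset.subset_union_right)

lemma configs_bag_subset_relConfigs (Q : CSPInstance n) :
    ∀ t : NiceTree n, configs Q t.bag ⊆ t.relConfigs Q
  | leaf v => subset_rfl
  | introduce v t => by simp only [relConfigs, bag]; exact Finset.subset_union_left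
  | forget v t => by simp only [relConfigs, bag]; exact Finset.subset_union_left
  | join t₁ t₂ => by
      simp only [relConfigs, bag]
      exact (configs_bag_subset_relConfigs Q t₁).trans Finset.subset_union_left

lemma exists_subtree_of_mem_relConfigs (Q : CSPInstance n) :
    ∀ t : NiceTree n, ∀ K ∈ t.relConfigs Q, ∃ s : NiceTree n, s.isSubtree t ∧ K ∈ configs Q s.bag
  | leaf v, K, hK => ⟨leaf v, rfl, hK⟩
  | introduce v t, K, hK => by
      rcases Finset.mem_union.mp hK with h | h
      · exact ⟨introduce v t, Or.inl rfl, h⟩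
      · obtain ⟨s, hs, hKs⟩ := exists_subtree_of_mem_relConfigs Q t K h
        exact ⟨s, Or.inr hs, hKs⟩
  | forget v t, K, hK => by
      rcases Finset.mem_union.mp hK with h | h
      · exact ⟨forget v t, Or.inl rfl, h⟩
      · obtain ⟨s, hs, hKs⟩ := exists_subtree_of_mem_relConfigs Q t K h
        exact ⟨s, Or.inr hs, hKs⟩
  | join t₁ t₂, K, hK => by
      rcases Finset.mem_union.mp hK with h | h
      · obtain ⟨s, hs, hKs⟩ := exists_subtree_of_mem_relConfigs Q t₁ K h
        exact ⟨s, Or.inr (Or.inl hs), hKs⟩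
      · obtain ⟨s, hs, hKs⟩ := exists_subtree_of_mem_relConfigs Q t₂ K h
        exact ⟨s, Or.inr (Or.inr hs), hKs⟩

end NiceTree

lemma rootBagEq {Q : CSPInstance n} {f : (Fin n → Option ℝ) → ℝ} :
    ∀ t : NiceTree n, RelCons Q f t → ∑ K ∈ configs Q t.bag, f K = 1
  | .leaf v, h => h
  | .introduce v t, h => h.2.1
  | .forget v t, h => h.2.1
  | .join t₁ t₂, h => rootBagEq t₁ h.1

lemma relCons_of_subtree {Q : CSPInstance n} {f : (Fin n → Option ℝ) → ℝ} :
    ∀ (t s : NiceTree n), s.isSubtree t → RelCons Q f t → RelCons Q f s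
  | .leaf v, s, hs, h => by rw [show s = .leaf v from hs]; exact h
  | .introduce v t, s, hs, h => by
      rcases hs with rfl | hs
      · exact h
      · exact relCons_of_subtree t s hs h.1
  | .forget v t, s, hs, h => by
      rcases hs with rfl | hs
      · exact h
      · exact relCons_of_subtree t s hs h.1
  | .join t₁ t₂, s, hs, h => by
      rcases hs with rfl | hs | hs
      · exact h
      · exact relCons_of_subtree t₁ s hs h.1
      · exact relCons_of_subtree t₂ s hs h.2

lemma relCons_congr {Q : CSPInstance n} :
    ∀ (t : NiceTree n) (f g : (Fin n → Option ℝ) → ℝ),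
      (∀ K ∈ t.relConfigs Q, f K = g K) → RelCons Q f t → RelCons Q g t
  | .leaf v, f, g, h, hf => by
      show ∑ K ∈ configs Q {v}, g K = 1
      rw [← hf]
      exact Finset.sum_congr rfl fun K hK => (h K hK).symm
  | .introduce v t, f, g, h, hf => by
      have hsub : t.relConfigs Q ⊆ (NiceTree.introduce v t).relConfigs Q :=
        NiceTree.relConfigs_subset_of_subtree Q _ t (Or.inr (NiceTree.isSubtree_refl t))
      have hcfg : configs Q (insert v t.bag) ⊆ (NiceTree.introduce v t).relConfigs Q :=
        NiceTree.configs_bag_subset_relConfigs Q (NiceTree.introduce v t)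
      refine ⟨relCons_congr t f g (fun K hK => h K (hsub hK)) hf.1, ?_, ?_⟩
      · rw [← hf.2.1]
        exact Finset.sum_congr rfl fun K hK => (h K (hcfg hK)).symm
      · intro K hK
        rw [← h K (hsub (NiceTree.configs_bag_subset_relConfigs Q t hK)), ← hf.2.2 K hK]
        exact Finset.sum_congr rfl fun K' hK' =>
          (h K' (hcfg (Finset.mem_filter.mp hK').1)).symm
  | .forget v t, f, g, h, hf => by
      have hsub : t.relConfigs Q ⊆ (NiceTree.forget v t).relConfigs Q :=
        NiceTree.relConfigs_subset_of_subtree Q _ t (Or.inr (NiceTree.isSubtree_refl t))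
      have hcfg : configs Q (t.bag.erase v) ⊆ (NiceTree.forget v t).relConfigs Q :=
        NiceTree.configs_bag_subset_relConfigs Q (NiceTree.forget v t)
      refine ⟨relCons_congr t f g (fun K hK => h K (hsub hK)) hf.1, ?_, ?_⟩
      · rw [← hf.2.1]
        exact Finset.sum_congr rfl fun K hK => (h K (hcfg hK)).symm
      · intro K hK
        rw [← h K (hcfg hK), ← hf.2.2 K hK]
        exact Finset.sum_congr rfl fun K' hK' =>
          (h K' (hsub (NiceTree.configs_bag_subset_relConfigs Q t
            (Finset.mem_filter.mp hK').1))).symm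
  | .join t₁ t₂, f, g, h, hf => by
      have hsub₁ : t₁.relConfigs Q ⊆ (NiceTree.join t₁ t₂).relConfigs Q :=
        NiceTree.relConfigs_subset_of_subtree Q _ t₁ (Or.inr (Or.inl (NiceTree.isSubtree_refl t₁)))
      have hsub₂ : t₂.relConfigs Q ⊆ (NiceTree.join t₁ t₂).relConfigs Q :=
        NiceTree.relConfigs_subset_of_subtree Q _ t₂ (Or.inr (Or.inr (NiceTree.isSubtree_refl t₂)))
      exact ⟨relCons_congr t₁ f g (fun K hK => h K (hsub₁ hK)) hf.1,
        relCons_congr t₂ f g (fun K hK => h K (hsub₂ hK)) hf.2⟩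

lemma existsOneKK {α : Type*} {s : Finset α} {g : α → ℝ}
    (hbin : ∀ x ∈ s, g x = 0 ∨ g x = 1)
    (hsum : ∑ x ∈ s, g x = 1) : ∃ x ∈ s, g x = 1 := by
  by_contra h
  push_neg at h
  have h0 : ∑ x ∈ s, g x = 0 :=
    Finset.sum_eq_zero fun x hx => (hbin x hx).resolve_right (h x hx)
  rw [h0] at hsum; norm_num at hsum

lemma uniqueOneKK {α : Type*} [DecidableEq α] {s : Finset α} {g : α → ℝ}
    (hsum : ∑ x ∈ s, g x = 1) (hnn : ∀ x ∈ s, 0 ≤ g x)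
    {a b : α} (ha : a ∈ s) (hb : b ∈ s) (hga : g a = 1) (hgb : g b = 1) : a = b := by
  by_contra hne
  have h1 : g b ≤ ∑ x ∈ s.erase a, g x :=
    Finset.single_le_sum (fun x hx => hnn x (Finset.mem_of_mem_erase hx))
      (Finset.mem_erase.mpr ⟨fun h => hne h.symm, hb⟩)
  have h2 : g a + ∑ x ∈ s.erase a, g x = 1 := by
    rw [Finset.add_sum_erase s g ha]; exact hsum
  rw [hga, hgb] at *
  linarith

lemma sum_binary_01 {α : Type*} {s : Finset α} {g : α → ℝ}
    (hbin : ∀ x ∈ s, g x = 0 ∨ g x = 1)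
    (huniq : ∀ x ∈ s, ∀ y ∈ s, g x = 1 → g y = 1 → x = y) :
    (∑ x ∈ s, g x) = 0 ∨ (∑ x ∈ s, g x) = 1 := by
  by_cases h : ∃ x ∈ s, g x = 1
  · obtain ⟨x, hx, hgx⟩ := h
    right
    rw [Finset.sum_eq_single_of_mem x hx]
    · exact hgx
    · intro y hy hne
      rcases hbin y hy with h0 | h1
      · exact h0
      · exact absurd (huniq y hy x hx h1 hgx) hne
  · left
    push_neg at h
    exact Finset.sum_eq_zero fun x hx => (hbin x hx).resolve_right (h x hx)

lemma binary_consistent {Q : CSPInstance n} {I : (Fin n → Option ℝ) → ℝ}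
    (hbin : ∀ K, I K = 0 ∨ I K = 1) :
    ∀ t : NiceTree n, t.valid → RelCons Q I t → (∀ K ∈ t.relConfigs Q, 0 ≤ I K) →
      ∀ s : NiceTree n, s.isSubtree t →
      ∀ K, K ∈ configs Q s.bag → I K = 1 →
      ∀ K', K' ∈ configs Q t.bag → I K' = 1 →
      ∀ u, u ∈ s.bag → u ∈ t.bag → K u = K' u
  | .leaf w, hval, hrc, hnn, s, hs, K, hK, hIK, K', hK', hIK', u, hus, hut => by
      classical
      rw [show s = .leaf w from hs] at hK
      rw [uniqueOneKK (rootBagEq (.leaf w) hrc)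
        (fun x hx => hnn x (NiceTree.configs_bag_subset_relConfigs Q _ hx)) hK hK' hIK hIK']
  | .introduce w t, hval, hrc, hnn, s, hs, K, hK, hIK, K', hK', hIK', u, hus, hut => by
      classical
      rcases hs with rfl | hs
      · exact by
          rw [uniqueOneKK (rootBagEq (.introduce w t) hrc)
            (fun x hx => hnn x (NiceTree.configs_bag_subset_relConfigs Q _ hx)) hK hK' hIK hIK']
      · have hut' : u ∈ t.bag := by
          rcases Finset.mem_insert.mp hut with rfl | h
          · exact absurd (NiceTree.verts_subset_of_subtree t s hs
              (NiceTree.bag_subset_verts s hus)) hval.1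
          · exact h
        have hK''mem : restrictCfg K' t.bag ∈ configs Q t.bag :=
          restrict_mem_configs (Finset.subset_insert w t.bag) hK'
        have hIK'' : I (restrictCfg K' t.bag) = 1 := by
          have hcons := hrc.2.2 (restrictCfg K' t.bag) hK''mem
          have hmemfil : K' ∈ (configs Q (insert w t.bag)).filter
              (fun K₂ => restrictCfg K₂ t.bag = restrictCfg K' t.bag) :=
            Finset.mem_filter.mpr ⟨hK', rfl⟩
          have hge : (1:ℝ) ≤ ∑ K₂ ∈ (configs Q (insert w t.bag)).filter
              (fun K₂ => restrictCfg K₂ t.bag = restrictCfg K' t.bag), I K₂ := by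
            rw [← hIK']
            exact Finset.single_le_sum (fun x hx => hnn x
              (NiceTree.configs_bag_subset_relConfigs Q (.introduce w t)
                (Finset.mem_filter.mp hx).1)) hmemfil
          rw [hcons] at hge
          rcases hbin (restrictCfg K' t.bag) with h0 | h1
          · rw [h0] at hge; linarith
          · exact h1
        have hrec := binary_consistent hbin t hval.2 hrc.1
          (fun K₂ hK₂ => hnn K₂ (NiceTree.relConfigs_subset_of_subtree Q (.introduce w t) t
            (Or.inr (NiceTree.isSubtree_refl t)) hK₂))
          s hs K hK hIK (restrictCfg K' t.bag) hK''mem hIK'' u hus hut'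
        rw [hrec]
        simp [restrictCfg, hut']
  | .forget w t, hval, hrc, hnn, s, hs, K, hK, hIK, K', hK', hIK', u, hus, hut => by
      classical
      rcases hs with rfl | hs
      · exact by
          rw [uniqueOneKK (rootBagEq (.forget w t) hrc)
            (fun x hx => hnn x (NiceTree.configs_bag_subset_relConfigs Q _ hx)) hK hK' hIK hIK']
      · have hut' : u ∈ t.bag := Finset.mem_of_mem_erase hut
        have hcons := hrc.2.2 K' hK'
        obtain ⟨K'', hK''fil, hIK''⟩ := existsOneKK
          (fun x _ => hbin x) (hcons.trans hIK')
        have hK''mem : K'' ∈ configs Q t.bag := (Finset.mem_filter.mp hK''fil).1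
        have hres : restrictCfg K'' (t.bag.erase w) = K' := (Finset.mem_filter.mp hK''fil).2
        have hrec := binary_consistent hbin t hval.2 hrc.1
          (fun K₂ hK₂ => hnn K₂ (NiceTree.relConfigs_subset_of_subtree Q (.forget w t) t
            (Or.inr (NiceTree.isSubtree_refl t)) hK₂))
          s hs K hK hIK K'' hK''mem hIK'' u hus hut'
        rw [hrec, ← hres]
        simp only [restrictCfg, if_pos (show u ∈ t.bag.erase w from hut)]
  | .join t₁ t₂, hval, hrc, hnn, s, hs, K, hK, hIK, K', hK', hIK', u, hus, hut => by
      classical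
      obtain ⟨hbag, -, hv1, hv2⟩ := hval
      rcases hs with rfl | hs | hs
      · exact by
          rw [uniqueOneKK (rootBagEq (.join t₁ t₂) hrc)
            (fun x hx => hnn x (NiceTree.configs_bag_subset_relConfigs Q _ hx)) hK hK' hIK hIK']
      · exact binary_consistent hbin t₁ hv1 hrc.1
          (fun K₂ hK₂ => hnn K₂ (NiceTree.relConfigs_subset_of_subtree Q (.join t₁ t₂) t₁
            (Or.inr (Or.inl (NiceTree.isSubtree_refl t₁))) hK₂))
          s hs K hK hIK K' hK' hIK' u hus hut
      · have hK'₂ : K' ∈ configs Q t₂.bag := by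
          have : (NiceTree.join t₁ t₂).bag = t₂.bag := hbag
          rwa [this] at hK'
        have hut₂ : u ∈ t₂.bag := by
          have : (NiceTree.join t₁ t₂).bag = t₂.bag := hbag
          rwa [this] at hut
        exact binary_consistent hbin t₂ hv2 hrc.2
          (fun K₂ hK₂ => hnn K₂ (NiceTree.relConfigs_subset_of_subtree Q (.join t₁ t₂) t₂
            (Or.inr (Or.inr (NiceTree.isSubtree_refl t₂))) hK₂))
          s hs K hK hIK K' hK'₂ hIK' u hus hut₂

end ForgetAux

section ForgetAux2

lemma marginal_eq {Q : CSPInstance n} {b : NiceTree n} {v : Fin n} (hv : v ∈ b.bag)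
    (hvb : b.valid) {I : (Fin n → Option ℝ) → ℝ}
    (hbin : ∀ K, I K = 0 ∨ I K = 1)
    (hRb : RelCons Q I b) (hnn : ∀ K ∈ b.relConfigs Q, 0 ≤ I K)
    {K : Fin n → Option ℝ} (hKrel : K ∈ b.relConfigs Q)
    (hKE : K ∈ configs Q (b.bag.erase v)) :
    ∑ K' ∈ (configs Q b.bag).filter (fun K' => restrictCfg K' (b.bag.erase v) = K), I K' = I K := by
  classical
  obtain ⟨s, hs, hKs⟩ := NiceTree.exists_subtree_of_mem_relConfigs Q b K hKrel
  have hbag : s.bag = b.bag.erase v := configs_eq_of_mem hKs hKE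
  have hnnb : ∀ x ∈ configs Q b.bag, 0 ≤ I x :=
    fun x hx => hnn x (NiceTree.configs_bag_subset_relConfigs Q b hx)
  have hrootsum : ∑ K' ∈ configs Q b.bag, I K' = 1 := rootBagEq b hRb
  rcases hbin K with hK0 | hK1
  · -- marginal is zero
    rw [hK0]
    refine Finset.sum_eq_zero fun K' hK' => ?_
    obtain ⟨hK'mem, hK'res⟩ := Finset.mem_filter.mp hK'
    rcases hbin K' with h0 | h1
    · exact h0
    · exfalso
      -- get the 1-config at node s
      have hssum : ∑ K₂ ∈ configs Q s.bag, I K₂ = 1 :=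
        rootBagEq s (relCons_of_subtree b s hs hRb)
      obtain ⟨K₂, hK₂mem, hIK₂⟩ := existsOneKK (fun x _ => hbin x) hssum
      have heq : K₂ = K := by
        funext u
        by_cases hu : u ∈ s.bag
        · have := binary_consistent hbin b hvb hRb hnn s hs K₂ hK₂mem hIK₂ K' hK'mem h1 u hu
            (Finset.erase_subset v b.bag (hbag ▸ hu))
          rw [this, ← hK'res]
          simp [restrictCfg, hbag ▸ hu]
        · rw [cfg_none hK₂mem hu, cfg_none hKE (by rwa [← hbag])]
      rw [heq] at hIK₂
      rw [hK0] at hIK₂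
      norm_num at hIK₂
  · -- marginal is one
    obtain ⟨K₀, hK₀mem, hIK₀⟩ := existsOneKK (fun x _ => hbin x) hrootsum
    have hres : restrictCfg K₀ (b.bag.erase v) = K := by
      funext u
      by_cases hu : u ∈ b.bag.erase v
      · have hKu := binary_consistent hbin b hvb hRb hnn s hs K hKs hK1 K₀ hK₀mem hIK₀ u
          (hbag ▸ hu) (Finset.erase_subset v b.bag hu)
        simp only [restrictCfg, if_pos hu]
        exact hKu.symm
      · simp only [restrictCfg, if_neg hu]
        exact (cfg_none hKE hu).symm
    rw [hK1]
    have hmem : K₀ ∈ (configs Q b.bag).filter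
        (fun K' => restrictCfg K' (b.bag.erase v) = K) :=
      Finset.mem_filter.mpr ⟨hK₀mem, hres⟩
    have hzero : ∀ K' ∈ (configs Q b.bag).filter
        (fun K' => restrictCfg K' (b.bag.erase v) = K), K' ≠ K₀ → I K' = 0 := by
      intro K' hK' hne
      obtain ⟨hK'mem, -⟩ := Finset.mem_filter.mp hK'
      rcases hbin K' with h0 | h1
      · exact h0
      · exact absurd (uniqueOneKK hrootsum hnnb hK'mem hK₀mem h1 hIK₀) hne
    rw [Finset.sum_eq_single_of_mem K₀ hmem hzero]
    exact hIK₀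

end ForgetAux2


/-- Inductive step at a forget node. -/
theorem forget_step (n : ℕ) (Q : CSPInstance n) (T : NiceTree n)
    (hT : IsNiceTreeDecompCSP Q T) (v : Fin n) (b : NiceTree n)
    (hv : v ∈ b.bag)
    (hsub : (NiceTree.forget v b).isSubtree T)
    (f : (Fin n → Option ℝ) → ℝ) (hf : f ∈ Ppoly Q T)
    (M : ℕ) (hM : 0 < M)
    (hint : ∀ K ∈ (NiceTree.forget v b).relConfigs Q, ∃ k : ℤ, (M : ℝ) * f K = (k : ℝ))
    (I : Fin M → ((Fin n → Option ℝ) → ℝ))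
    (hIbin : ∀ i K, I i K = 0 ∨ I i K = 1)
    (hIrel : ∀ i, RelevantLP Q b (I i))
    (hIavg : ∀ K ∈ b.relConfigs Q, f K = (1 / (M : ℝ)) * ∑ i, I i K) :
    ∃ J : Fin M → ((Fin n → Option ℝ) → ℝ),
      (∀ i K, J i K = 0 ∨ J i K = 1) ∧
      (∀ i, RelevantLP Q (NiceTree.forget v b) (J i)) ∧
      ∀ K ∈ (NiceTree.forget v b).relConfigs Q,
        f K = (1 / (M : ℝ)) * ∑ i, J i K := by
    classical
  have hvalF : (NiceTree.forget v b).valid := NiceTree.valid_of_subtree T _ hsub hT.1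
  have hvb : b.valid := hvalF.2
  have hfF : RelCons Q f (NiceTree.forget v b) := relCons_of_subtree T _ hsub hf.1.1
  have hnn : ∀ i, ∀ K ∈ b.relConfigs Q, 0 ≤ I i K := fun i K hK => ((hIrel i).2 K hK).1
  set J : Fin M → (Fin n → Option ℝ) → ℝ := fun i K =>
    if K ∈ configs Q (b.bag.erase v) then
      ∑ K' ∈ (configs Q b.bag).filter (fun K' => restrictCfg K' (b.bag.erase v) = K), I i K'
    else I i K with hJdef
  have hdisj : ∀ K', K' ∈ configs Q b.bag → K' ∉ configs Q (b.bag.erase v) := by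
    intro K' h h'
    have heq := configs_eq_of_mem h h'
    exact Finset.notMem_erase v b.bag (heq ▸ hv)
  have hJI : ∀ i K, K ∈ b.relConfigs Q → J i K = I i K := by
    intro i K hK
    by_cases hKE : K ∈ configs Q (b.bag.erase v)
    · simp only [hJdef, if_pos hKE]
      exact marginal_eq hv hvb (hIbin i) (hIrel i).1 (hnn i) hK hKE
    · simp only [hJdef, if_neg hKE]
  have hJbin : ∀ i K, J i K = 0 ∨ J i K = 1 := by
    intro i K
    by_cases hKE : K ∈ configs Q (b.bag.erase v)
    · simp only [hJdef, if_pos hKE]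
      refine sum_binary_01 (fun x _ => hIbin i x) ?_
      intro x hx y hy hx1 hy1
      exact uniqueOneKK (rootBagEq b (hIrel i).1)
        (fun z hz => hnn i z (NiceTree.configs_bag_subset_relConfigs Q b hz))
        (Finset.mem_filter.mp hx).1 (Finset.mem_filter.mp hy).1 hx1 hy1
    · simp only [hJdef, if_neg hKE]; exact hIbin i K
  refine ⟨J, hJbin, ?_, ?_⟩
  · intro i
    refine ⟨⟨relCons_congr b (I i) (J i) (fun K hK => (hJI i K hK).symm) (hIrel i).1, ?_, ?_⟩, ?_⟩
    · show ∑ K ∈ configs Q (b.bag.erase v), J i K = 1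
      calc ∑ K ∈ configs Q (b.bag.erase v), J i K
          = ∑ K ∈ configs Q (b.bag.erase v),
              ∑ K' ∈ (configs Q b.bag).filter
                (fun K' => restrictCfg K' (b.bag.erase v) = K), I i K' :=
            Finset.sum_congr rfl fun K hK => by simp only [hJdef, if_pos hK]
        _ = ∑ K' ∈ configs Q b.bag, I i K' :=
            Finset.sum_fiberwise_of_maps_to
              (fun K' hK' => restrict_mem_configs (Finset.erase_subset v b.bag) hK') _
        _ = 1 := rootBagEq b (hIrel i).1
    · intro K hK
      have hL : ∀ K' ∈ (configs Q b.bag).filter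
          (fun K' => restrictCfg K' (b.bag.erase v) = K), J i K' = I i K' := fun K' hK' => by
        simp only [hJdef, if_neg (hdisj K' (Finset.mem_filter.mp hK').1)]
      rw [Finset.sum_congr rfl hL]
      simp only [hJdef, if_pos hK]
    · intro K hK
      rcases hJbin i K with h | h <;> rw [h] <;> norm_num
  · intro K hK
    by_cases hKb : K ∈ b.relConfigs Q
    · rw [hIavg K hKb]
      congr 1
      exact Finset.sum_congr rfl fun i _ => (hJI i K hKb).symm
    · have hKE : K ∈ configs Q (b.bag.erase v) := by
        have hK' : K ∈ configs Q (b.bag.erase v) ∪ b.relConfigs Q := hK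
        rcases Finset.mem_union.mp hK' with h | h
        · exact h
        · exact absurd h hKb
      have hMne : (M:ℝ) ≠ 0 := Nat.cast_ne_zero.mpr hM.ne'
      have key : ∑ i, J i K = (M:ℝ) * f K := by
        calc ∑ i, J i K
            = ∑ i, ∑ K' ∈ (configs Q b.bag).filter
                (fun K' => restrictCfg K' (b.bag.erase v) = K), I i K' :=
              Finset.sum_congr rfl fun i _ => by simp only [hJdef, if_pos hKE]
          _ = ∑ K' ∈ (configs Q b.bag).filter
                (fun K' => restrictCfg K' (b.bag.erase v) = K), ∑ i, I i K' :=
              Finset.sum_comm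
          _ = ∑ K' ∈ (configs Q b.bag).filter
                (fun K' => restrictCfg K' (b.bag.erase v) = K), (M:ℝ) * f K' := by
              refine Finset.sum_congr rfl fun K' hK' => ?_
              have hrel : K' ∈ b.relConfigs Q :=
                NiceTree.configs_bag_subset_relConfigs Q b (Finset.mem_filter.mp hK').1
              rw [hIavg K' hrel]
              field_simp
          _ = (M:ℝ) * ∑ K' ∈ (configs Q b.bag).filter
                (fun K' => restrictCfg K' (b.bag.erase v) = K), f K' :=
              (Finset.mul_sum _ _ _).symm
          _ = (M:ℝ) * f K := by rw [hfF.2.2 K hKE]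
      rw [key]
      field_simp
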